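/- arXiv:2102.05142 — 2 statements merged into one kernel-verified Lean document; each statement's English description precedes it below -/
import Mathlib

section
/- Let q be a prime power, let d ≥ 2 and 0 < m < d, let W be an m-dimensional subspace of 𝔽_q^d, and let H be the setwise stabilizer of W in GL_d(𝔽_q). If r > 1 is an integer dividing q^d − 1 with gcd(r, q^i − 1) = 1 for every 1 ≤ i < d, then r does not divide |H|. -/
open Module

private lemma card_aut_eq_card_GL (F : Type) [Field F] [Fintype F] (M : Type)
    [AddCommGroup M] [Module F M] [Finite M] (n : ℕ) (h : finrank F M = n) :
    Nat.card (M ≃ₗ[F] M) = Nat.card (GL (Fin n) F) := by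
  let b : Basis (Fin n) F M := Module.finBasisOfFinrankEq F M h
  refine Nat.card_congr ?_
  exact ((LinearMap.GeneralLinearGroup.generalLinearEquiv F M).symm.trans
    (Units.mapEquiv (LinearMap.toMatrixAlgEquiv b).toMulEquiv)).toEquiv

private lemma not_dvd_card_GL (F : Type) [Field F] [Fintype F] (p n : ℕ) (hp : p.Prime)
    (hq : ¬ p ∣ Fintype.card F)
    (hfac : ∀ i, 1 ≤ i → i ≤ n → ¬ p ∣ Fintype.card F ^ i - 1) :
    ¬ p ∣ Nat.card (GL (Fin n) F) := by
  rw [Matrix.card_GL_field]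
  rw [Prime.dvd_finset_prod_iff hp.prime]
  rintro ⟨i, -, hdvd⟩
  set q := Fintype.card F with hqdef
  have hq1 : 1 ≤ q := Fintype.card_pos
  have hin : (i : ℕ) < n := i.2
  have hfactor : q ^ n - q ^ (i : ℕ) = q ^ (i : ℕ) * (q ^ (n - (i : ℕ)) - 1) := by
    have hni : (i : ℕ) + (n - (i : ℕ)) = n := by omega
    rw [Nat.mul_sub, mul_one, ← pow_add, hni]
  rw [hfactor] at hdvd
  rcases hp.dvd_mul.1 hdvd with h | h
  · exact hq (hp.dvd_of_dvd_pow h)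
  · exact hfac (n - i) (by omega) (by omega) h

theorem stmt_12 (F : Type) [Field F] [Fintype F] (d m : ℕ)
    (hd : 2 ≤ d) (hm0 : 0 < m) (hmd : m < d)
    (W : Submodule F (Fin d → F)) (hW : finrank F W = m)
    (r : ℕ) (hr : 1 < r) (hdvd : r ∣ Fintype.card F ^ d - 1)
    (hprim : ∀ i, 1 ≤ i → i < d → Nat.gcd r (Fintype.card F ^ i - 1) = 1) :
    ¬ r ∣ Set.ncard {g : (Fin d → F) ≃ₗ[F] (Fin d → F) |
        W.map (g : (Fin d → F) →ₗ[F] (Fin d → F)) = W} := by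
  set V := Fin d → F
  set q := Fintype.card F with hqdef
  have hq2 : 2 ≤ q := Fintype.one_lt_card
  -- the stabilizer subgroup
  have inv_mem : ∀ g : V ≃ₗ[F] V, W.map (g : V →ₗ[F] V) = W →
      W.map ((g⁻¹ : V ≃ₗ[F] V) : V →ₗ[F] V) = W := by
    intro g hg
    conv_lhs => rw [← hg]
    rw [← Submodule.map_comp]
    have h1 : ((g⁻¹ : V ≃ₗ[F] V) : V →ₗ[F] V).comp (g : V →ₗ[F] V)
        = ((g⁻¹ * g : V ≃ₗ[F] V) : V →ₗ[F] V) := rfl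
    rw [h1, inv_mul_cancel]
    exact Submodule.map_id W
  let H : Subgroup (V ≃ₗ[F] V) :=
    { carrier := {g : V ≃ₗ[F] V | W.map (g : V →ₗ[F] V) = W}
      one_mem' := Submodule.map_id W
      mul_mem' := by
        intro a b ha hb
        show W.map ((a * b : V ≃ₗ[F] V) : V →ₗ[F] V) = W
        have : ((a * b : V ≃ₗ[F] V) : V →ₗ[F] V)
            = (a : V →ₗ[F] V).comp (b : V →ₗ[F] V) := rfl
        rw [this, Submodule.map_comp, hb, ha]
      inv_mem' := fun {g} hg => inv_mem g hg }
  have finiteLE : Finite (V ≃ₗ[F] V) :=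
    Finite.of_injective (fun g : V ≃ₗ[F] V => (g : V → V))
      (fun a b hab => DFunLike.coe_injective hab)
  intro hrH
  have hcard : Set.ncard {g : V ≃ₗ[F] V | W.map (g : V →ₗ[F] V) = W} = Nat.card H := by
    rw [← Nat.card_coe_set_eq]
    rfl
  rw [hcard] at hrH
  -- pick a prime dividing r
  obtain ⟨p, hp, hpr⟩ := Nat.exists_prime_and_dvd (by omega : r ≠ 1)
  have hppow : p ∣ q ^ d - 1 := hpr.trans hdvd
  have hqd1 : 1 ≤ q ^ d := Nat.one_le_pow _ _ (by omega)
  have hpq : ¬ p ∣ q := by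
    intro h
    have h1 : p ∣ q ^ d := h.trans (dvd_pow_self q (by omega))
    have : p ∣ 1 := by
      have := Nat.dvd_sub h1 hppow
      simpa [Nat.sub_sub_self hqd1] using this
    exact hp.one_lt.ne' (Nat.dvd_one.mp this)
  have hpfac : ∀ i, 1 ≤ i → i < d → ¬ p ∣ q ^ i - 1 := by
    intro i h1 h2 hpd
    have := Nat.dvd_gcd hpr hpd
    rw [hprim i h1 h2] at this
    exact hp.one_lt.ne' (Nat.dvd_one.mp this)
  have hpH : p ∣ Nat.card H := hpr.trans hrH
  haveI : Fact p.Prime := ⟨hp⟩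
  obtain ⟨g', hg'⟩ := exists_prime_orderOf_dvd_card' (G := H) p hpH
  set g : V ≃ₗ[F] V := (g' : V ≃ₗ[F] V) with hgdef
  have hordg : orderOf g = p := by rw [hgdef, Subgroup.orderOf_coe]; exact hg'
  have hmapW : W.map (g : V →ₗ[F] V) = W := g'.2
  -- restriction of g to W
  let e : W ≃ₗ[F] W :=
    (g.submoduleMap W).trans (LinearEquiv.ofEq _ _ hmapW)
  have he_apply : ∀ x : W, (e x : V) = g (x : V) := fun x => rfl
  have hgpow_one : g ^ p = 1 := by rw [← hordg]; exact pow_orderOf_eq_one g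
  have hek : ∀ (k : ℕ) (x : W), ((e ^ k) x : V) = (g ^ k) (x : V) := by
    intro k
    induction k with
    | zero => intro x; simp
    | succ n ih =>
      intro x
      rw [pow_succ', pow_succ']
      show (e ((e ^ n) x) : V) = g ((g ^ n) (x : V))
      rw [he_apply, ih]
  have hep : e ^ p = 1 := by
    apply LinearEquiv.ext
    intro x
    apply Subtype.ext
    rw [show ((1 : W ≃ₗ[F] W) x : V) = (x : V) from rfl]
    rw [hek p x, hgpow_one]
    rfl
  -- e = 1
  have hcardW : Nat.card (W ≃ₗ[F] W) = Nat.card (GL (Fin m) F) :=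
    card_aut_eq_card_GL F W m hW
  have hnotdvdW : ¬ p ∣ Nat.card (W ≃ₗ[F] W) := by
    rw [hcardW]
    exact not_dvd_card_GL F p m hp hpq (fun i h1 h2 => hpfac i h1 (lt_of_le_of_lt h2 hmd))
  have he1 : e = 1 := by
    have hord : orderOf e ∣ p := orderOf_dvd_of_pow_eq_one hep
    rcases (Nat.dvd_prime hp).1 hord with h | h
    · exact orderOf_eq_one_iff.1 h
    · exact absurd (h ▸ orderOf_dvd_natCard e) hnotdvdW
  have hfix : ∀ x : V, x ∈ W → g x = x := by
    intro x hx
    have := congrArg (fun f : W ≃ₗ[F] W => (f ⟨x, hx⟩ : V)) he1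
    simpa [he_apply] using this
  -- the quotient map
  let Q := V ⧸ W
  let gQ : Q ≃ₗ[F] Q := Submodule.Quotient.equiv W W g hmapW
  have hgQ_apply : ∀ x : V, gQ (Submodule.Quotient.mk x) = Submodule.Quotient.mk (g x) := by
    intro x
    rfl
  have hgQk : ∀ (k : ℕ) (x : V),
      (gQ ^ k) (Submodule.Quotient.mk x) = Submodule.Quotient.mk ((g ^ k) x) := by
    intro k
    induction k with
    | zero => intro x; simp
    | succ n ih =>
      intro x
      rw [pow_succ', pow_succ']
      show gQ ((gQ ^ n) (Submodule.Quotient.mk x)) = Submodule.Quotient.mk (g ((g ^ n) x))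
      rw [ih, hgQ_apply]
  have hgQp : gQ ^ p = 1 := by
    apply LinearEquiv.ext
    intro x
    induction x using Submodule.Quotient.induction_on with
    | H x => rw [hgQk p x, hgpow_one]; rfl
  have hfinQ : finrank F Q = d - m := by
    have h1 := Submodule.finrank_quotient_add_finrank W
    have h2 : finrank F (Fin d → F) = d := by
      simp [Module.finrank_fintype_fun_eq_card]
    show finrank F ((Fin d → F) ⧸ W) = d - m
    rw [hW, h2] at h1
    omega
  have hcardQ : Nat.card (Q ≃ₗ[F] Q) = Nat.card (GL (Fin (d - m)) F) :=
    card_aut_eq_card_GL F Q (d - m) hfinQ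
  have hnotdvdQ : ¬ p ∣ Nat.card (Q ≃ₗ[F] Q) := by
    rw [hcardQ]
    exact not_dvd_card_GL F p (d - m) hp hpq
      (fun i h1 h2 => hpfac i h1 (by omega))
  have hgQ1 : gQ = 1 := by
    have hord : orderOf gQ ∣ p := orderOf_dvd_of_pow_eq_one hgQp
    rcases (Nat.dvd_prime hp).1 hord with h | h
    · exact orderOf_eq_one_iff.1 h
    · exact absurd (h ▸ orderOf_dvd_natCard gQ) hnotdvdQ
  have hsub : ∀ x : V, g x - x ∈ W := by
    intro x
    have := congrArg (fun f : Q ≃ₗ[F] Q => f (Submodule.Quotient.mk x)) hgQ1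
    simp only [hgQ_apply] at this
    rw [show ((1 : Q ≃ₗ[F] Q) (Submodule.Quotient.mk x) : Q)
        = Submodule.Quotient.mk x from rfl] at this
    exact (Submodule.Quotient.eq W).1 this
  -- g = 1 + nilpotent, g^p = 1 ⟹ g = 1
  have hkey : ∀ (k : ℕ) (x : V), (g ^ k) x = x + k • (g x - x) := by
    intro k
    induction k with
    | zero => intro x; simp
    | succ n ih =>
      intro x
      rw [pow_succ']
      show g ((g ^ n) x) = _
      rw [ih, map_add]
      rw [map_nsmul, hfix _ (hsub x)]
      rw [succ_nsmul]
      have : g x = x + (g x - x) := by abel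
      rw [this]
      abel
  have hgx : ∀ x : V, g x = x := by
    intro x
    have h1 : (g ^ p) x = x := by rw [hgpow_one]; rfl
    rw [hkey p x] at h1
    have h2 : (p : ℕ) • (g x - x) = 0 := by
      exact add_eq_left.mp h1
    rw [← Nat.cast_smul_eq_nsmul F (M := Fin d → F)] at h2
    rcases (smul_eq_zero (M := Fin d → F)).1 h2 with h | h
    · exfalso
      have hring : (↑p : F) = 0 := h
      rw [CharP.cast_eq_zero_iff F (ringChar F) p] at hring
      have hcprime : (ringChar F).Prime := CharP.char_is_prime F (ringChar F)
      have : ringChar F = p := ((Nat.prime_dvd_prime_iff_eq hcprime hp).1 hring)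
      obtain ⟨n, hn⟩ := FiniteField.card F (ringChar F)
      apply hpq
      rw [hqdef, hn.2, ← this]
      exact dvd_pow_self (ringChar F) (by exact_mod_cast n.2.ne')
    · have : g x - x = 0 := h
      linear_combination (norm := abel) this
  have : g = 1 := by
    apply LinearEquiv.ext
    intro x
    exact hgx x
  rw [this, orderOf_one] at hordg
  exact hp.one_lt.ne' hordg.symm
end

section
/- Let q ≥ 2 be an integer and d = 2m an even integer with m ≥ 2. If r > 1 is an integer dividing q^{d−1} − 1 with gcd(r, q^i − 1) = 1 for every 1 ≤ i < d−1, then r does not divide 2 · q^{m(m−1)} · (∏_{i=1}^{m−1} (q^{2i} − 1)) · (q^m − 1), and r does not divide 2 · q^{m(m−1)} · (∏_{i=1}^{m−1} (q^{2i} − 1)) · (q^m + 1). (These products are the orders of the orthogonal groups GO_{2m}^+(q) and GO_{2m}^-(q); hence no non-trivial primitive divisor of q^{d−1} − 1 divides |GO_d^±(q)|.) -/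
theorem stmt_14 (q m : ℕ) (hq : 2 ≤ q) (hm : 2 ≤ m)
    (r : ℕ) (hr : 1 < r) (hdvd : r ∣ q ^ (2 * m - 1) - 1)
    (hprim : ∀ i, 1 ≤ i → i < 2 * m - 1 → Nat.gcd r (q ^ i - 1) = 1) :
    (¬ r ∣ 2 * q ^ (m * (m - 1)) * (∏ i ∈ Finset.Icc 1 (m - 1), (q ^ (2 * i) - 1)) * (q ^ m - 1)) ∧
    (¬ r ∣ 2 * q ^ (m * (m - 1)) * (∏ i ∈ Finset.Icc 1 (m - 1), (q ^ (2 * i) - 1)) * (q ^ m + 1)) := by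
  have hq1 : 1 ≤ q := by omega
  -- r coprime to q - 1
  have hc1 : Nat.Coprime r (q - 1) := by
    have := hprim 1 le_rfl (by omega)
    simpa using this
  -- r coprime to q
  have hcq : Nat.Coprime r q := by
    have hN : 1 ≤ q ^ (2 * m - 1) := Nat.one_le_pow _ _ (by omega)
    have hco : Nat.Coprime (q ^ (2 * m - 1) - 1) (q ^ (2 * m - 1)) := by
      have h1 : Nat.Coprime (q ^ (2 * m - 1) - 1) (q ^ (2 * m - 1) - 1 + 1) := by simp
      rwa [Nat.sub_add_cancel hN] at h1
    exact ((Nat.Coprime.coprime_dvd_left hdvd hco).coprime_dvd_right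
      (dvd_pow_self q (by omega)))
  -- r is odd
  have hc2 : Nat.Coprime r 2 := by
    rcases Nat.even_or_odd q with he | ho
    · -- q even, so gcd(r, q) = 1 forces r odd
      have h2r : ¬ 2 ∣ r := by
        intro h2
        have h2q : (2 : ℕ) ∣ q := he.two_dvd
        have : (2 : ℕ) ∣ Nat.gcd r q := Nat.dvd_gcd h2 h2q
        rw [hcq] at this
        omega
      exact ((Nat.Prime.coprime_iff_not_dvd Nat.prime_two).mpr h2r).symm
    · have h2 : 2 ∣ q - 1 := by
        have := Nat.odd_iff.mp ho
        omega
      exact hc1.coprime_dvd_right h2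
  -- r coprime to q^i - 1 for valid i
  have hpow : ∀ i, 1 ≤ i → i < 2 * m - 1 → Nat.Coprime r (q ^ i - 1) := fun i h1 h2 =>
    hprim i h1 h2
  -- r coprime to q^m + 1
  have hcm1 : Nat.Coprime r (q ^ m + 1) := by
    rw [Nat.coprime_iff_gcd_eq_one]
    set g := Nat.gcd r (q ^ m + 1) with hg
    have hgr : g ∣ r := Nat.gcd_dvd_left _ _
    have hgm : g ∣ q ^ m + 1 := Nat.gcd_dvd_right _ _
    have hqm : 1 ≤ q ^ m := Nat.one_le_pow _ _ (by omega)
    have hfact : q ^ (2 * m) - 1 = (q ^ m + 1) * (q ^ m - 1) := by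
      have h2m : q ^ (2 * m) = q ^ m * q ^ m := by rw [two_mul, pow_add]
      obtain ⟨b, hb⟩ : ∃ b, q ^ m = b + 1 := ⟨q ^ m - 1, by omega⟩
      rw [h2m, hb, Nat.add_sub_cancel]
      have h : (b + 1) * (b + 1) = (b + 1 + 1) * b + 1 := by ring
      rw [h, Nat.add_sub_cancel]
    have hg2m : g ∣ q ^ (2 * m) - 1 := hfact ▸ hgm.mul_right _
    have hgd : g ∣ q ^ (2 * m - 1) - 1 := hgr.trans hdvd
    have h2m1 : q ^ (2 * m) = q * q ^ (2 * m - 1) := by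
      rw [← pow_succ']
      congr 1
      omega
    have hgq : g ∣ q ^ (2 * m) - q := by
      have := hgd.mul_left q
      rwa [Nat.mul_sub, mul_one, ← h2m1] at this
    have hN : q ≤ q ^ (2 * m) := Nat.le_self_pow (by omega) q
    have hgq1 : g ∣ q - 1 := by
      have hsub := Nat.dvd_sub hg2m hgq
      have heq : q ^ (2 * m) - 1 - (q ^ (2 * m) - q) = q - 1 := by omega
      rwa [heq] at hsub
    exact Nat.eq_one_of_dvd_coprimes hc1 hgr hgq1
  -- r coprime to the product
  have hcprod : Nat.Coprime r (∏ i ∈ Finset.Icc 1 (m - 1), (q ^ (2 * i) - 1)) := by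
    apply Nat.Coprime.prod_right
    intro i hi
    simp only [Finset.mem_Icc] at hi
    exact hpow (2 * i) (by omega) (by omega)
  have hcA : Nat.Coprime r
      (2 * q ^ (m * (m - 1)) * (∏ i ∈ Finset.Icc 1 (m - 1), (q ^ (2 * i) - 1))) :=
    ((hc2.mul_right (hcq.pow_right _)).mul_right hcprod)
  constructor
  · intro hdvd'
    have hcm : Nat.Coprime r (q ^ m - 1) := hpow m (by omega) (by omega)
    have hco : Nat.Coprime r
        (2 * q ^ (m * (m - 1)) * (∏ i ∈ Finset.Icc 1 (m - 1), (q ^ (2 * i) - 1)) * (q ^ m - 1)) :=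
      hcA.mul_right hcm
    have := hco.eq_one_of_dvd hdvd'
    omega
  · intro hdvd'
    have hco : Nat.Coprime r
        (2 * q ^ (m * (m - 1)) * (∏ i ∈ Finset.Icc 1 (m - 1), (q ^ (2 * i) - 1)) * (q ^ m + 1)) :=
      hcA.mul_right hcm1
    have := hco.eq_one_of_dvd hdvd'
    omega
end
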